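/- arXiv:1810.05066 — 2 statements merged into one kernel-verified Lean document; each statement's English description precedes it below -/
import Mathlib

section
/- For all q ≥ 1, n ≥ 1, d ∈ ℕ and k ≥ 2, one has A_q^L(n,d) ≤ B_k^L(q,n,d). -/
/-- The Lee weight of an element of `ZMod q`. -/
def leeWt (q : ℕ) (a : ZMod q) : ℕ := min a.val (q - a.val)

/-- The Lee distance between two words in `(ZMod q)^n`. -/
def leeDist (q n : ℕ) (u v : Fin n → ZMod q) : ℕ := ∑ i, leeWt q (u i - v i)

/-- `𝒞_k`: the codes `C ⊆ (ℤ/qℤ)^n` with `|C| ≤ k`. -/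
abbrev CodesLe (q n k : ℕ) : Type _ := {C : Finset (Fin n → ZMod q) // C.card ≤ k}

/-- `𝒞_k(D)`: the codes `C ∈ 𝒞_k` with `C ⊇ D` and `|D| + 2|C∖D| ≤ k`. -/
abbrev SubCodes (q n k : ℕ) (D : CodesLe q n k) : Type _ :=
  {C : CodesLe q n k // D.1 ⊆ C.1 ∧ D.1.card + 2 * (C.1 \ D.1).card ≤ k}

lemma union_card_le {α : Type*} [DecidableEq α] {k : ℕ} {D C C' : Finset α}
    (hC : D ⊆ C) (hC' : D ⊆ C')
    (h : D.card + 2 * (C \ D).card ≤ k) (h' : D.card + 2 * (C' \ D).card ≤ k) :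
    (C ∪ C').card ≤ k := by
  have h1 : C ∪ C' ⊆ D ∪ (C \ D) ∪ (C' \ D) := by
    intro a ha
    simp only [Finset.mem_union, Finset.mem_sdiff] at *
    rcases ha with ha | ha
    · by_cases hD : a ∈ D
      · exact Or.inl (Or.inl hD)
      · exact Or.inl (Or.inr ⟨ha, hD⟩)
    · by_cases hD : a ∈ D
      · exact Or.inl (Or.inl hD)
      · exact Or.inr ⟨ha, hD⟩
  have h2 := Finset.card_le_card h1
  have h3 := Finset.card_union_le (D ∪ (C \ D)) (C' \ D)
  have h4 := Finset.card_union_le D (C \ D)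
  omega

/-- The matrix `M_{k,D}(x)` with entries `x(C ∪ C′)` for `C, C′ ∈ 𝒞_k(D)`. -/
def MkD (q n k : ℕ) (x : CodesLe q n k → ℝ) (D : CodesLe q n k) :
    Matrix (SubCodes q n k D) (SubCodes q n k D) ℝ :=
  fun C C' => x ⟨C.1.1 ∪ C'.1.1, union_card_le C.2.1 C'.2.1 C.2.2 C'.2.2⟩

/-- Feasibility for the level-`k` semidefinite program bounding `A_q^L(n,d)`:
`x(∅) = 1`, `x(S) = 0` whenever `S` has minimum Lee distance `< d`, and every
matrix `M_{k,D}(x)` is positive semidefinite. -/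
def FeasibleL (q n d k : ℕ) [NeZero q] (x : CodesLe q n k → ℝ) : Prop :=
  x ⟨∅, by simp⟩ = 1 ∧
  (∀ S : CodesLe q n k,
    (∃ u ∈ S.1, ∃ v ∈ S.1, u ≠ v ∧ leeDist q n u v < d) → x S = 0) ∧
  ∀ D : CodesLe q n k, (MkD q n k x D).PosSemidef

/-- The objective value `Σ_{v ∈ ℤ_q^n} x({v})`. -/
def objectiveL (q n k : ℕ) [NeZero q] (hk : 1 ≤ k) (x : CodesLe q n k → ℝ) : ℝ :=
  ∑ v : Fin n → ZMod q, x ⟨{v}, by simpa using hk⟩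

/-- The semidefinite programming bound `B_k^L(q,n,d)`. -/
noncomputable def BL (q n d k : ℕ) [NeZero q] (hk : 1 ≤ k) : ℝ :=
  sSup {y | ∃ x : CodesLe q n k → ℝ, FeasibleL q n d k x ∧ y = objectiveL q n k hk x}

/-- `A_q^L(n,d)`: the maximum cardinality of a code in `(ℤ/qℤ)^n` with minimum
Lee distance at least `d`. -/
noncomputable def ALee (q n d : ℕ) : ℕ :=
  sSup {m | ∃ C : Finset (Fin n → ZMod q), C.card = m ∧
    ∀ u ∈ C, ∀ v ∈ C, u ≠ v → d ≤ leeDist q n u v}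

open Matrix in
lemma rankOne_psd {ι : Type*} [Fintype ι] (v : ι → ℝ) : (Matrix.vecMulVec v v).PosSemidef := by
  refine Matrix.posSemidef_iff_dotProduct_mulVec.mpr ⟨?_, ?_⟩
  · ext i j; simp [Matrix.vecMulVec_apply, mul_comm, Matrix.conjTranspose_apply]
  · intro y
    have h : star y ⬝ᵥ (Matrix.vecMulVec v v) *ᵥ y = (∑ i, v i * y i) * (∑ i, v i * y i) := by
      simp only [star_trivial, dotProduct, Matrix.mulVec, Matrix.vecMulVec_apply,
        Finset.sum_mul, Finset.mul_sum]
      rw [Finset.sum_comm]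
      apply Finset.sum_congr rfl; intro i _
      apply Finset.sum_congr rfl; intro j _
      ring
    rw [h]
    exact mul_self_nonneg _

open Matrix in
lemma psd_quad {ι : Type*} [Fintype ι] [DecidableEq ι] {M : Matrix ι ι ℝ}
    (hM : M.PosSemidef) (i j : ι) (a b : ℝ) :
    0 ≤ a*a*M i i + a*b*M i j + b*a*M j i + b*b*M j j := by
  have h := hM.dotProduct_mulVec_nonneg (Pi.single i a + Pi.single j b)
  rw [Matrix.mulVec_add] at h
  simp only [star_trivial, dotProduct_add, add_dotProduct, Matrix.mulVec_single,
    single_dotProduct, dotProduct_single] at h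
  simp only [Pi.smul_apply, Matrix.col_apply, op_smul_eq_mul] at h
  linarith [h]

/-- Every feasible `x` has `x({v}) ∈ [0,1]`. -/
lemma singleton_le_one (q n d k : ℕ) [NeZero q] (hk : 2 ≤ k) (x : CodesLe q n k → ℝ)
    (hx : FeasibleL q n d k x) (v : Fin n → ZMod q) :
    x ⟨{v}, by simp only [Finset.card_singleton]; omega⟩ ≤ 1 := by
  set D : CodesLe q n k := ⟨∅, by simp⟩ with hD
  have hpsd := hx.2.2 D
  set Ce : SubCodes q n k D := ⟨⟨∅, by simp⟩, by simp [hD]⟩ with hCe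
  set Cv : SubCodes q n k D := ⟨⟨{v}, by simp only [Finset.card_singleton]; omega⟩, by simp [hD]; omega⟩ with hCv
  set a : ℝ := x ⟨{v}, by simp only [Finset.card_singleton]; omega⟩ with ha
  have hee : MkD q n k x D Ce Ce = 1 := by
    have : MkD q n k x D Ce Ce = x ⟨∅, by simp⟩ := by
      simp [MkD, hCe]
    rw [this, hx.1]
  have hev : MkD q n k x D Ce Cv = a := by
    simp [MkD, hCe, hCv, ha]
  have hve : MkD q n k x D Cv Ce = a := by
    simp [MkD, hCe, hCv, ha]
  have hvv : MkD q n k x D Cv Cv = a := by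
    simp [MkD, hCv, ha]
  have h1 := psd_quad hpsd Ce Cv a (-1)
  have h2 := psd_quad hpsd Cv Ce 1 0
  rw [hee, hev, hve, hvv] at h1
  rw [hvv] at h2
  nlinarith [h1, h2]

/-- For all `q ≥ 1`, `n ≥ 1`, `d ∈ ℕ` and `k ≥ 2`,
`A_q^L(n,d) ≤ B_k^L(q,n,d)`. -/
theorem stmt3 (q n d k : ℕ) [NeZero q] (hn : 1 ≤ n) (hk : 2 ≤ k) :
    (ALee q n d : ℝ) ≤ BL q n d k (by omega) := by
  classical
  have hk1 : 1 ≤ k := by omega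
  -- Obtain an optimal code
  have hmem : ALee q n d ∈ {m | ∃ C : Finset (Fin n → ZMod q), C.card = m ∧
      ∀ u ∈ C, ∀ v ∈ C, u ≠ v → d ≤ leeDist q n u v} := by
    apply Nat.sSup_mem
    · exact ⟨0, ∅, by simp, by simp⟩
    · exact ⟨Fintype.card (Fin n → ZMod q), fun m ⟨C, hC, _⟩ => hC ▸ Finset.card_le_univ C⟩
  obtain ⟨C0, hcard, hdist⟩ := hmem
  -- Construct the feasible solution
  set x : CodesLe q n k → ℝ := fun S => if S.1 ⊆ C0 then 1 else 0 with hxdef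
  have hfeas : FeasibleL q n d k x := by
    refine ⟨by simp [hxdef], ?_, ?_⟩
    · rintro S ⟨u, hu, v, hv, huv, hlt⟩
      simp only [hxdef]
      rw [if_neg]
      intro hsub
      exact absurd hlt (not_lt.2 (hdist u (hsub hu) v (hsub hv) huv))
    · intro D
      have hM : MkD q n k x D =
          Matrix.vecMulVec (fun C : SubCodes q n k D => if C.1.1 ⊆ C0 then (1:ℝ) else 0)
            (fun C : SubCodes q n k D => if C.1.1 ⊆ C0 then (1:ℝ) else 0) := by
        ext C C'
        simp only [MkD, Matrix.vecMulVec_apply, hxdef]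
        by_cases h1 : C.1.1 ⊆ C0 <;> by_cases h2 : C'.1.1 ⊆ C0 <;>
          simp [Finset.union_subset_iff, h1, h2]
      rw [hM]
      exact rankOne_psd _
  have hobj : objectiveL q n k hk1 x = (C0.card : ℝ) := by
    simp only [objectiveL, hxdef, Finset.singleton_subset_iff]
    rw [Finset.sum_ite_mem, Finset.univ_inter, Finset.sum_const]
    simp
  have hBdd : BddAbove {y | ∃ x : CodesLe q n k → ℝ,
      FeasibleL q n d k x ∧ y = objectiveL q n k hk1 x} := by
    refine ⟨(Fintype.card (Fin n → ZMod q) : ℝ), ?_⟩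
    rintro y ⟨z, hz, rfl⟩
    calc objectiveL q n k hk1 z ≤ ∑ _v : Fin n → ZMod q, (1:ℝ) := by
          apply Finset.sum_le_sum
          intro v _
          exact singleton_le_one q n d k hk z hz v
      _ = (Fintype.card (Fin n → ZMod q) : ℝ) := by simp
  have := le_csSup hBdd (show (ALee q n d : ℝ) ∈ _ from ⟨x, hfeas, by rw [hobj, hcard]⟩)
  exact this
end

section
/- Let q ≥ 1 be odd and define Π ⊆ (ℤ/qℤ)³ as the set of triples (0, 0, j) for integer 0 ≤ j ≤ (q−1)/2 together with the triples (0, j, h) for integer 1 ≤ j ≤ (q−1)/2 and h ∈ ℤ/qℤ (integers embedded in ℤ/qℤ). Then every triple in (ℤ/qℤ)³ lies in the same orbit of the diagonal action of the dihedral group D_q = {x ↦ εx + s : ε ∈ {1,−1}, s ∈ ℤ/qℤ} as exactly one element of Π; that is, Π is a transversal of the D_q-orbits of (ℤ/qℤ)³. -/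
/-- The diagonal action of the dihedral group `{x ↦ εx + s : ε ∈ {1,−1}, s ∈ ℤ/qℤ}`
on ordered triples: `p` and `p'` are related iff some dihedral map sends `p` to `p'`. -/
def dihedralRel3 (q : ℕ) (p p' : ZMod q × ZMod q × ZMod q) : Prop :=
  ∃ ε s : ZMod q, (ε = 1 ∨ ε = -1) ∧
    p'.1 = ε * p.1 + s ∧ p'.2.1 = ε * p.2.1 + s ∧ p'.2.2 = ε * p.2.2 + s

/-- The set `Π` of triples `(0,0,j)` for `0 ≤ j ≤ (q−1)/2` and `(0,j,h)` for
`1 ≤ j ≤ (q−1)/2`, `h ∈ ℤ/qℤ`. -/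
def PiSet (q : ℕ) : Set (ZMod q × ZMod q × ZMod q) :=
  {p | ∃ j : ℕ, j ≤ (q - 1) / 2 ∧ p = (0, 0, (j : ZMod q))} ∪
  {p | ∃ (j : ℕ) (h : ZMod q), 1 ≤ j ∧ j ≤ (q - 1) / 2 ∧ p = (0, (j : ZMod q), h)}

lemma dihedralRel3_symm {q : ℕ} {p p' : ZMod q × ZMod q × ZMod q}
    (h : dihedralRel3 q p p') : dihedralRel3 q p' p := by
  obtain ⟨ε, s, hε, h1, h2, h3⟩ := h
  refine ⟨ε, -ε * s, hε, ?_, ?_, ?_⟩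
  · rcases hε with rfl | rfl <;> simp only [h1] <;> ring
  · rcases hε with rfl | rfl <;> simp only [h2] <;> ring
  · rcases hε with rfl | rfl <;> simp only [h3] <;> ring

lemma dihedralRel3_trans {q : ℕ} {p p' p'' : ZMod q × ZMod q × ZMod q}
    (h : dihedralRel3 q p p') (h' : dihedralRel3 q p' p'') : dihedralRel3 q p p'' := by
  obtain ⟨ε, s, hε, h1, h2, h3⟩ := h
  obtain ⟨ε', s', hε', h1', h2', h3'⟩ := h'
  refine ⟨ε' * ε, ε' * s + s', ?_, ?_, ?_, ?_⟩
  · rcases hε with rfl | rfl <;> rcases hε' with rfl | rfl <;> simp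
  all_goals simp only [h1', h2', h3', h1, h2, h3]; ring

/-- Key arithmetic fact for uniqueness. -/
lemma cast_add_eq_zero {q : ℕ} (hq : 1 ≤ q) (hodd : Odd q) {j j' : ℕ}
    (hj : j ≤ (q - 1) / 2) (hj' : j' ≤ (q - 1) / 2)
    (h : (j : ZMod q) + (j' : ZMod q) = 0) : j = 0 ∧ j' = 0 := by
  haveI : NeZero q := ⟨by omega⟩
  have h2 : ((j + j' : ℕ) : ZMod q) = 0 := by push_cast; exact h
  have hdvd : q ∣ j + j' := (ZMod.natCast_eq_zero_iff _ _).mp h2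
  obtain ⟨k, hk⟩ := hodd
  rcases Nat.eq_zero_or_pos (j + j') with h0 | h0
  · omega
  · have := Nat.le_of_dvd h0 hdvd
    omega

lemma cast_ne_zero_of_bounds {q : ℕ} (hq : 1 ≤ q) (hodd : Odd q) {j : ℕ}
    (h1 : 1 ≤ j) (h2 : j ≤ (q - 1) / 2) : (j : ZMod q) ≠ 0 := by
  haveI : NeZero q := ⟨by omega⟩
  intro h
  have hdvd : q ∣ j := (ZMod.natCast_eq_zero_iff _ _).mp h
  obtain ⟨k, hk⟩ := hodd
  have := Nat.le_of_dvd (by omega) hdvd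
  omega

lemma pi_unique {q : ℕ} (hq : 1 ≤ q) (hodd : Odd q)
    {p p' : ZMod q × ZMod q × ZMod q} (hp : p ∈ PiSet q) (hp' : p' ∈ PiSet q)
    (h : dihedralRel3 q p p') : p = p' := by
  obtain ⟨ε, s, hε, h1, h2, h3⟩ := h
  rcases hp with ⟨j, hj, rfl⟩ | ⟨j, hh, hj1, hj2, rfl⟩ <;>
    rcases hp' with ⟨j', hj', rfl⟩ | ⟨j', hh', hj1', hj2', rfl⟩
  · -- both in first set
    simp only at h1 h2 h3
    have hs : s = 0 := by rcases hε with rfl | rfl <;> simpa using h1.symm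
    subst hs
    rcases hε with rfl | rfl
    · simp only [one_mul, add_zero] at h3
      rw [h3]
    · simp only [neg_one_mul, add_zero] at h3
      have : (j : ZMod q) + (j' : ZMod q) = 0 := by rw [h3]; ring
      obtain ⟨e1, e2⟩ := cast_add_eq_zero hq hodd hj hj' this
      subst e1; subst e2; rfl
  · -- first, second: contradiction
    exfalso
    simp only at h1 h2
    have hs : s = 0 := by rcases hε with rfl | rfl <;> simpa using h1.symm
    subst hs
    have : (j' : ZMod q) = 0 := by rcases hε with rfl | rfl <;> simpa using h2
    exact cast_ne_zero_of_bounds hq hodd hj1' hj2' this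
  · -- second, first: contradiction
    exfalso
    simp only at h1 h2
    have hs : s = 0 := by rcases hε with rfl | rfl <;> simpa using h1.symm
    subst hs
    rcases hε with rfl | rfl
    · exact cast_ne_zero_of_bounds hq hodd hj1 hj2 (by simpa using h2.symm)
    · have : (j : ZMod q) + 0 = 0 := by
        have := h2; simp only [neg_one_mul, add_zero] at this
        rw [add_zero]; exact (neg_eq_zero.mp this.symm)
      obtain ⟨e1, _⟩ := cast_add_eq_zero hq hodd hj2 (by omega : (0:ℕ) ≤ (q-1)/2)
        (by simpa using this)
      omega
  · -- both in second set
    simp only at h1 h2 h3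
    have hs : s = 0 := by rcases hε with rfl | rfl <;> simpa using h1.symm
    subst hs
    rcases hε with rfl | rfl
    · simp only [one_mul, add_zero] at h2 h3
      rw [h2, h3]
    · exfalso
      simp only [neg_one_mul, add_zero] at h2
      have : (j : ZMod q) + (j' : ZMod q) = 0 := by rw [h2]; ring
      obtain ⟨e1, _⟩ := cast_add_eq_zero hq hodd hj2 hj2' this
      omega

/-- for odd `q`, every triple in `(ℤ/qℤ)³` is in the same dihedral orbit
as exactly one element of `Π`; i.e. `Π` is a transversal of the orbits. -/
theorem stmt17 (q : ℕ) (hq : 1 ≤ q) (hodd : Odd q) (t : ZMod q × ZMod q × ZMod q) :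
    ∃! p, p ∈ PiSet q ∧ dihedralRel3 q t p := by
  haveI : NeZero q := ⟨by omega⟩
  obtain ⟨k, hk⟩ := hodd
  set u := t.2.1 - t.1 with hu
  set v := t.2.2 - t.1 with hv
  have rel1 : dihedralRel3 q t (0, u, v) := ⟨1, -t.1, Or.inl rfl, by ring, by ring, by ring⟩
  have rel2 : dihedralRel3 q t (0, -u, -v) := ⟨-1, t.1, Or.inr rfl, by ring, by ring, by ring⟩
  have hq2 : (q - 1) / 2 = k := by omega
  -- choose the representative
  have main : ∃ p, p ∈ PiSet q ∧ dihedralRel3 q t p := by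
    by_cases hu0 : u = 0
    · by_cases hvb : v.val ≤ (q - 1) / 2
      · exact ⟨(0, u, v), Or.inl ⟨v.val, hvb, by simp [ZMod.natCast_zmod_val, hu0]⟩, rel1⟩
      · refine ⟨(0, -u, -v), Or.inl ⟨(-v).val, ?_, by simp [ZMod.natCast_zmod_val, hu0]⟩, rel2⟩
        have hv0 : v ≠ 0 := by intro h; rw [h, ZMod.val_zero] at hvb; omega
        rw [ZMod.neg_val, if_neg hv0]
        have := ZMod.val_lt v
        omega
    · have hval : u.val ≠ 0 := fun h => hu0 ((ZMod.val_eq_zero u).mp h)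
      by_cases hub : u.val ≤ (q - 1) / 2
      · exact ⟨(0, u, v), Or.inr ⟨u.val, v, by omega, hub, by rw [ZMod.natCast_zmod_val]⟩, rel1⟩
      · refine ⟨(0, -u, -v), Or.inr ⟨(-u).val, -v, ?_, ?_, by rw [ZMod.natCast_zmod_val]⟩, rel2⟩
        · rw [ZMod.neg_val, if_neg hu0]
          have := ZMod.val_lt u
          omega
        · rw [ZMod.neg_val, if_neg hu0]
          have := ZMod.val_lt u
          omega
  obtain ⟨p, hp, hrel⟩ := main
  refine ⟨p, ⟨hp, hrel⟩, ?_⟩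
  rintro p' ⟨hp', hrel'⟩
  exact pi_unique hq ⟨k, hk⟩ hp' hp (dihedralRel3_trans (dihedralRel3_symm hrel') hrel)
end
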